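/- Let g ≥ 3 and let H, ψ be as follows: H is the 𝔽₂-vector space spanned by f₁,…,f_{2g+1} with relation Σfᵢ = 0, and ψ : H^{⊗3} → 𝔽₂ is the linear map with ψ(f_i⊗f_j⊗f_k) equal to 1 exactly when precisely two of i,j,k coincide, and 0 otherwise. Let σ act on H by σ(f_i) = f₁ + f_i for i = 2,…,2g+1 and σ(f₁) = f₁. If ψ is σ-invariant on H^{⊗3}, then ψ(f_j⊗f_i⊗f_i) = 0 for all i ≠ j would be forced; since instead ψ(f_j⊗f_i⊗f_i) = 1, ψ is not σ-invariant. Conclude: the space of S_{2g+2}-invariant linear maps H^{⊗3} → 𝔽₂ is zero, where S_{2g+2} acts via permutations of e₀,…,e_{2g+1} with f_i = e₀ + e_i. -/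
import Mathlib

open Finset

def fv (n : ℕ) [NeZero n] (i : Fin n) : Fin n → ZMod 2 :=
  Pi.single 0 1 + Pi.single i 1

lemma fv_sum_coords (n : ℕ) [NeZero n] (i : Fin n) : (∑ x, fv n i x) = 0 := by
  simp only [fv, Pi.add_apply, Finset.sum_add_distrib, Pi.single_apply,
    Finset.sum_ite_eq', Finset.mem_univ, if_true]
  decide

lemma fv_sum_one (n : ℕ) [NeZero n] (hn : n % 2 = 0) :
    (∑ i ∈ univ.erase (0 : Fin n), fv n i) = fun _ => 1 := by
  funext x
  rw [Finset.sum_apply]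
  simp only [fv, Pi.add_apply, Finset.sum_add_distrib, Pi.single_apply,
    Finset.sum_ite_eq']
  have hn0 : n ≠ 0 := NeZero.ne n
  by_cases hx : x = 0
  · subst hx
    simp only [if_pos rfl, Finset.sum_const, Finset.card_erase_of_mem (Finset.mem_univ _),
      Finset.card_univ, Fintype.card_fin, Finset.sum_ite_eq, Finset.mem_erase, ne_eq,
      not_true_eq_false, false_and, if_false, add_zero]
    rw [nsmul_eq_mul, if_pos trivial, mul_one, ← ZMod.natCast_mod]
    have : (n - 1) % 2 = 1 := by omega
    rw [this]
    norm_num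
  · simp [hx, Finset.sum_const, Finset.sum_ite_eq]

lemma fv_comp_swap (n : ℕ) [NeZero n] (x y : Fin n) (hx : x ≠ 0) (hy : y ≠ 0) (a : Fin n) :
    fv n a ∘ (Equiv.swap x y) = fv n (Equiv.swap x y a) := by
  funext z
  have hz0 : Equiv.swap x y (0 : Fin n) = 0 :=
    Equiv.swap_apply_of_ne_of_ne (Ne.symm hx) (Ne.symm hy)
  simp only [fv, Function.comp_apply, Pi.add_apply, Pi.single_apply,
    Equiv.swap_apply_eq_iff]
  rw [hz0]

lemma fv_comp_tau (n : ℕ) [NeZero n] (b : Fin n) (hb : b ≠ 0) (a : Fin n)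
    (ha : a ≠ 0) (hab : a ≠ b) :
    fv n a ∘ (Equiv.swap 0 b) = fv n b + fv n a := by
  funext z
  simp only [fv, Function.comp_apply, Pi.add_apply, Pi.single_apply,
    Equiv.swap_apply_eq_iff, Equiv.swap_apply_left]
  rw [Equiv.swap_apply_of_ne_of_ne ha hab]
  by_cases hz0 : z = 0 <;> by_cases hzb : z = b <;> by_cases hza : z = a <;>
    simp_all <;> decide

lemma fv_comp_tau_self (n : ℕ) [NeZero n] (b : Fin n) (hb : b ≠ 0) :
    fv n b ∘ (Equiv.swap 0 b) = fv n b := by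
  funext z
  simp only [fv, Function.comp_apply, Pi.add_apply, Pi.single_apply,
    Equiv.swap_apply_eq_iff, Equiv.swap_apply_left, Equiv.swap_apply_right]
  by_cases hz0 : z = 0 <;> by_cases hzb : z = b <;> simp_all <;> decide

lemma aux_red (n : ℕ) [NeZero n] (φ : (Fin n → ZMod 2) → ZMod 2)
    (hadd : ∀ a b, φ (a + b) = φ a + φ b)
    (hf : ∀ i : Fin n, i ≠ 0 → φ (fv n i) = 0) :
    ∀ x : Fin n → ZMod 2, (∑ i, x i) = 0 → φ x = 0 := by
  have hz2 : ∀ c : ZMod 2, c = 0 ∨ c = 1 := by decide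
  have hz2' : ∀ a b : ZMod 2, a + b = 0 → b = a := by decide
  intro x hx
  set Φ : (Fin n → ZMod 2) →+ ZMod 2 := AddMonoidHom.mk' φ hadd with hΦ
  have hsingle : ∀ i : Fin n, Φ (Pi.single i (x i)) = x i * Φ (Pi.single 0 1) := by
    intro i
    rcases hz2 (x i) with h | h
    · rw [h, Pi.single_zero, map_zero, zero_mul]
    · rw [h, one_mul]
      by_cases hi : i = 0
      · rw [hi]
      · have := hf i hi
        have h2 : Φ (Pi.single 0 1) + Φ (Pi.single i 1) = 0 := by
          rw [← map_add]; exact this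
        exact hz2' _ _ h2
  calc φ x = Φ (∑ i, Pi.single i (x i)) := by rw [Finset.univ_sum_single]; rfl
    _ = ∑ i, Φ (Pi.single i (x i)) := map_sum Φ _ _
    _ = ∑ i, x i * Φ (Pi.single 0 1) := by simp only [hsingle]
    _ = (∑ i, x i) * Φ (Pi.single 0 1) := (Finset.sum_mul _ _ _).symm
    _ = 0 := by rw [hx, zero_mul]

/-- The space of `S_{2g+2}`-invariant linear maps `H^{⊗3} → 𝔽₂` is zero.  Here `H` is
identified with the sum-zero submodule of the permutation module on `e₀,…,e_{2g+1}`
(via `f_i = e₀ + e_i`), modulo the all-ones vector; `ψ` is an additive map in each slot,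
defined on this `H` via representatives (so it kills the all-ones vector) and
invariant under all permutations of the `2g+2` letters. -/
theorem stmt11 (g : ℕ) (hg : 3 ≤ g)
    (ψ : (Fin (2 * g + 2) → ZMod 2) → (Fin (2 * g + 2) → ZMod 2) →
      (Fin (2 * g + 2) → ZMod 2) → ZMod 2)
    (add1 : ∀ x x' y z, ψ (x + x') y z = ψ x y z + ψ x' y z)
    (add2 : ∀ x y y' z, ψ x (y + y') z = ψ x y z + ψ x y' z)
    (add3 : ∀ x y z z', ψ x y (z + z') = ψ x y z + ψ x y z')
    (rel1 : ∀ y z, ψ (fun _ => 1) y z = 0)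
    (rel2 : ∀ x z, ψ x (fun _ => 1) z = 0)
    (rel3 : ∀ x y, ψ x y (fun _ => 1) = 0)
    (hinv : ∀ (σ : Equiv.Perm (Fin (2 * g + 2))) (x y z : Fin (2 * g + 2) → ZMod 2),
      (∑ i, x i) = 0 → (∑ i, y i) = 0 → (∑ i, z i) = 0 →
      ψ (x ∘ σ) (y ∘ σ) (z ∘ σ) = ψ x y z) :
    ∀ x y z : Fin (2 * g + 2) → ZMod 2,
      (∑ i, x i) = 0 → (∑ i, y i) = 0 → (∑ i, z i) = 0 → ψ x y z = 0 := by
  haveI : NeZero (2 * g + 2) := ⟨by omega⟩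
  -- fresh element lemma
  have fresh : ∀ a b c d e f h : Fin (2 * g + 2), ∃ t : Fin (2 * g + 2),
      t ≠ a ∧ t ≠ b ∧ t ≠ c ∧ t ≠ d ∧ t ≠ e ∧ t ≠ f ∧ t ≠ h := by
    intro a b c d e f h
    have k1 : ({h} : Finset (Fin (2 * g + 2))).card ≤ 1 := by simp
    have k2 : ({f, h} : Finset (Fin (2 * g + 2))).card ≤ 2 :=
      (Finset.card_insert_le _ _).trans (Nat.add_le_add_right k1 1)
    have k3 : ({e, f, h} : Finset (Fin (2 * g + 2))).card ≤ 3 :=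
      (Finset.card_insert_le _ _).trans (Nat.add_le_add_right k2 1)
    have k4 : ({d, e, f, h} : Finset (Fin (2 * g + 2))).card ≤ 4 :=
      (Finset.card_insert_le _ _).trans (Nat.add_le_add_right k3 1)
    have k5 : ({c, d, e, f, h} : Finset (Fin (2 * g + 2))).card ≤ 5 :=
      (Finset.card_insert_le _ _).trans (Nat.add_le_add_right k4 1)
    have k6 : ({b, c, d, e, f, h} : Finset (Fin (2 * g + 2))).card ≤ 6 :=
      (Finset.card_insert_le _ _).trans (Nat.add_le_add_right k5 1)
    have k7 : ({a, b, c, d, e, f, h} : Finset (Fin (2 * g + 2))).card ≤ 7 :=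
      (Finset.card_insert_le _ _).trans (Nat.add_le_add_right k6 1)
    have hne : (({a, b, c, d, e, f, h} : Finset (Fin (2 * g + 2)))ᶜ).Nonempty := by
      rw [← Finset.card_pos, Finset.card_compl, Fintype.card_fin]
      omega
    obtain ⟨t, ht⟩ := hne
    simp only [Finset.mem_compl, Finset.mem_insert, Finset.mem_singleton, not_or] at ht
    exact ⟨t, ht.1, ht.2.1, ht.2.2.1, ht.2.2.2.1, ht.2.2.2.2.1, ht.2.2.2.2.2.1,
      ht.2.2.2.2.2.2⟩
  obtain ⟨o1, o2, o3, o4, h1, h2, h3, h4, h12, h13, h14, h23, h24, h34⟩ :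
      ∃ o1 o2 o3 o4 : Fin (2 * g + 2), o1 ≠ 0 ∧ o2 ≠ 0 ∧ o3 ≠ 0 ∧ o4 ≠ 0 ∧ o1 ≠ o2 ∧
        o1 ≠ o3 ∧ o1 ≠ o4 ∧ o2 ≠ o3 ∧ o2 ≠ o4 ∧ o3 ≠ o4 := by
    refine ⟨⟨1, by omega⟩, ⟨2, by omega⟩, ⟨3, by omega⟩, ⟨4, by omega⟩,
      ?_, ?_, ?_, ?_, ?_, ?_, ?_, ?_, ?_, ?_⟩ <;>
      simp [Fin.ext_iff]
  -- invariance under swaps of nonzero letters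
  have vswap : ∀ x y : Fin (2 * g + 2), x ≠ 0 → y ≠ 0 → ∀ a b c : Fin (2 * g + 2),
      ψ (fv _ (Equiv.swap x y a)) (fv _ (Equiv.swap x y b)) (fv _ (Equiv.swap x y c))
        = ψ (fv _ a) (fv _ b) (fv _ c) := by
    intro x y hx hy a b c
    have h := hinv (Equiv.swap x y) (fv _ a) (fv _ b) (fv _ c)
      (fv_sum_coords _ _) (fv_sum_coords _ _) (fv_sum_coords _ _)
    rwa [fv_comp_swap _ x y hx hy, fv_comp_swap _ x y hx hy,
      fv_comp_swap _ x y hx hy] at h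
  have move1 : ∀ x y b c : Fin (2 * g + 2), x ≠ 0 → y ≠ 0 → b ≠ x → b ≠ y → c ≠ x → c ≠ y →
      ψ (fv _ y) (fv _ b) (fv _ c) = ψ (fv _ x) (fv _ b) (fv _ c) := by
    intro x y b c hx hy hbx hby hcx hcy
    have s := vswap x y hx hy x b c
    rwa [Equiv.swap_apply_left, Equiv.swap_apply_of_ne_of_ne hbx hby,
      Equiv.swap_apply_of_ne_of_ne hcx hcy] at s
  have move2 : ∀ x y a c : Fin (2 * g + 2), x ≠ 0 → y ≠ 0 → a ≠ x → a ≠ y → c ≠ x → c ≠ y →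
      ψ (fv _ a) (fv _ y) (fv _ c) = ψ (fv _ a) (fv _ x) (fv _ c) := by
    intro x y a c hx hy hax hay hcx hcy
    have s := vswap x y hx hy a x c
    rwa [Equiv.swap_apply_left, Equiv.swap_apply_of_ne_of_ne hax hay,
      Equiv.swap_apply_of_ne_of_ne hcx hcy] at s
  have move3 : ∀ x y a b : Fin (2 * g + 2), x ≠ 0 → y ≠ 0 → a ≠ x → a ≠ y → b ≠ x → b ≠ y →
      ψ (fv _ a) (fv _ b) (fv _ y) = ψ (fv _ a) (fv _ b) (fv _ x) := by
    intro x y a b hx hy hax hay hbx hby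
    have s := vswap x y hx hy a b x
    rwa [Equiv.swap_apply_left, Equiv.swap_apply_of_ne_of_ne hax hay,
      Equiv.swap_apply_of_ne_of_ne hbx hby] at s
  have move12 : ∀ x y c : Fin (2 * g + 2), x ≠ 0 → y ≠ 0 → c ≠ x → c ≠ y →
      ψ (fv _ y) (fv _ y) (fv _ c) = ψ (fv _ x) (fv _ x) (fv _ c) := by
    intro x y c hx hy hcx hcy
    have s := vswap x y hx hy x x c
    rwa [Equiv.swap_apply_left, Equiv.swap_apply_of_ne_of_ne hcx hcy] at s
  have move13 : ∀ x y b : Fin (2 * g + 2), x ≠ 0 → y ≠ 0 → b ≠ x → b ≠ y →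
      ψ (fv _ y) (fv _ b) (fv _ y) = ψ (fv _ x) (fv _ b) (fv _ x) := by
    intro x y b hx hy hbx hby
    have s := vswap x y hx hy x b x
    rwa [Equiv.swap_apply_left, Equiv.swap_apply_of_ne_of_ne hbx hby] at s
  have move23 : ∀ x y a : Fin (2 * g + 2), x ≠ 0 → y ≠ 0 → a ≠ x → a ≠ y →
      ψ (fv _ a) (fv _ y) (fv _ y) = ψ (fv _ a) (fv _ x) (fv _ x) := by
    intro x y a hx hy hax hay
    have s := vswap x y hx hy a x x
    rwa [Equiv.swap_apply_left, Equiv.swap_apply_of_ne_of_ne hax hay] at s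
  -- constancy on orbit types
  have LA : ∀ a b c : Fin (2 * g + 2), a ≠ 0 → b ≠ 0 → c ≠ 0 → a ≠ b → a ≠ c → b ≠ c →
      ψ (fv _ a) (fv _ b) (fv _ c) = ψ (fv _ o2) (fv _ o3) (fv _ o4) := by
    intro a b c ha hb hc hab hac hbc
    obtain ⟨t1, ht1a, ht1b, ht1c, ht10, ht1o2, ht1o3, ht1o4⟩ := fresh a b c 0 o2 o3 o4
    obtain ⟨t2, ht2b, ht2c, ht2t1, ht20, ht2o2, ht2o3, ht2o4⟩ := fresh b c t1 0 o2 o3 o4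
    obtain ⟨t3, ht3c, ht3t1, ht3t2, ht30, ht3o2, ht3o3, ht3o4⟩ := fresh c t1 t2 0 o2 o3 o4
    calc ψ (fv _ a) (fv _ b) (fv _ c)
        = ψ (fv _ t1) (fv _ b) (fv _ c) :=
          (move1 a t1 b c ha ht10 hab.symm ht1b.symm hac.symm ht1c.symm).symm
      _ = ψ (fv _ t1) (fv _ t2) (fv _ c) :=
          (move2 b t2 t1 c hb ht20 ht1b ht2t1.symm hbc.symm ht2c.symm).symm
      _ = ψ (fv _ t1) (fv _ t2) (fv _ t3) :=
          (move3 c t3 t1 t2 hc ht30 ht1c ht3t1.symm ht2c ht3t2.symm).symm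
      _ = ψ (fv _ o2) (fv _ t2) (fv _ t3) :=
          move1 o2 t1 t2 t3 h2 ht10 ht2o2 ht2t1 ht3o2 ht3t1
      _ = ψ (fv _ o2) (fv _ o3) (fv _ t3) :=
          move2 o3 t2 o2 t3 h3 ht20 h23 ht2o2.symm ht3o3 ht3t2
      _ = ψ (fv _ o2) (fv _ o3) (fv _ o4) :=
          move3 o4 t3 o2 o3 h4 ht30 h24 ht3o2.symm h34 ht3o3.symm
  have LB12 : ∀ a b : Fin (2 * g + 2), a ≠ 0 → b ≠ 0 → a ≠ b →
      ψ (fv _ a) (fv _ a) (fv _ b) = ψ (fv _ o1) (fv _ o1) (fv _ o2) := by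
    intro a b ha hb hab
    obtain ⟨t, hta, htb, ht0, hto1, hto2, -, -⟩ := fresh a b 0 o1 o2 o2 o2
    calc ψ (fv _ a) (fv _ a) (fv _ b)
        = ψ (fv _ a) (fv _ a) (fv _ t) := (move3 b t a a hb ht0 hab hta.symm hab hta.symm).symm
      _ = ψ (fv _ o1) (fv _ o1) (fv _ t) := move12 o1 a t h1 ha hto1 hta
      _ = ψ (fv _ o1) (fv _ o1) (fv _ o2) := move3 o2 t o1 o1 h2 ht0 h12 hto1.symm h12 hto1.symm
  have LB13 : ∀ a b : Fin (2 * g + 2), a ≠ 0 → b ≠ 0 → a ≠ b →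
      ψ (fv _ a) (fv _ b) (fv _ a) = ψ (fv _ o1) (fv _ o2) (fv _ o1) := by
    intro a b ha hb hab
    obtain ⟨t, hta, htb, ht0, hto1, hto2, -, -⟩ := fresh a b 0 o1 o2 o2 o2
    calc ψ (fv _ a) (fv _ b) (fv _ a)
        = ψ (fv _ a) (fv _ t) (fv _ a) := (move2 b t a a hb ht0 hab hta.symm hab hta.symm).symm
      _ = ψ (fv _ o1) (fv _ t) (fv _ o1) := move13 o1 a t h1 ha hto1 hta
      _ = ψ (fv _ o1) (fv _ o2) (fv _ o1) := move2 o2 t o1 o1 h2 ht0 h12 hto1.symm h12 hto1.symm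
  have LB23 : ∀ a b : Fin (2 * g + 2), a ≠ 0 → b ≠ 0 → a ≠ b →
      ψ (fv _ b) (fv _ a) (fv _ a) = ψ (fv _ o2) (fv _ o1) (fv _ o1) := by
    intro a b ha hb hab
    obtain ⟨t, hta, htb, ht0, hto1, hto2, -, -⟩ := fresh a b 0 o1 o2 o2 o2
    calc ψ (fv _ b) (fv _ a) (fv _ a)
        = ψ (fv _ t) (fv _ a) (fv _ a) := (move1 b t a a hb ht0 hab hta.symm hab hta.symm).symm
      _ = ψ (fv _ t) (fv _ o1) (fv _ o1) := move23 o1 a t h1 ha hto1 hta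
      _ = ψ (fv _ o2) (fv _ o1) (fv _ o1) := move1 o2 t o1 o1 h2 ht0 h12 hto1.symm h12 hto1.symm
  -- sum relations
  have hsum1 : ∀ Y Z : Fin (2 * g + 2) → ZMod 2,
      (∑ i ∈ univ.erase (0 : Fin (2 * g + 2)), ψ (fv _ i) Y Z) = 0 := by
    intro Y Z
    have h := map_sum (AddMonoidHom.mk' (fun x => ψ x Y Z) (fun u v => add1 u v Y Z))
      (fun i => fv (2 * g + 2) i) (univ.erase (0 : Fin (2 * g + 2)))
    rw [fv_sum_one _ (by omega)] at h
    exact h.symm.trans (rel1 Y Z)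
  have hsum2 : ∀ X Z : Fin (2 * g + 2) → ZMod 2,
      (∑ i ∈ univ.erase (0 : Fin (2 * g + 2)), ψ X (fv _ i) Z) = 0 := by
    intro X Z
    have h := map_sum (AddMonoidHom.mk' (fun y => ψ X y Z) (fun u v => add2 X u v Z))
      (fun i => fv (2 * g + 2) i) (univ.erase (0 : Fin (2 * g + 2)))
    rw [fv_sum_one _ (by omega)] at h
    exact h.symm.trans (rel2 X Z)
  have hsum3 : ∀ X Y : Fin (2 * g + 2) → ZMod 2,
      (∑ i ∈ univ.erase (0 : Fin (2 * g + 2)), ψ X Y (fv _ i)) = 0 := by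
    intro X Y
    have h := map_sum (AddMonoidHom.mk' (fun z => ψ X Y z) (fun u v => add3 X Y u v))
      (fun i => fv (2 * g + 2) i) (univ.erase (0 : Fin (2 * g + 2)))
    rw [fv_sum_one _ (by omega)] at h
    exact h.symm.trans (rel3 X Y)
  -- the diagonal vanishes
  have LC : ∀ a : Fin (2 * g + 2), a ≠ 0 → ψ (fv _ a) (fv _ a) (fv _ a) = 0 := by
    intro a ha
    have h := hsum1 (fv _ a) (fv _ a)
    have hamem : a ∈ univ.erase (0 : Fin (2 * g + 2)) := by simp [ha]
    rw [← Finset.sum_erase_add _ _ hamem] at h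
    obtain ⟨b, hba, hb0, -, -, -, -, -⟩ := fresh a 0 0 0 0 0 0
    have hA : ∀ i ∈ (univ.erase (0 : Fin (2 * g + 2))).erase a,
        ψ (fv _ i) (fv _ a) (fv _ a) = ψ (fv _ b) (fv _ a) (fv _ a) := by
      intro i hi
      simp only [Finset.mem_erase] at hi
      exact move1 b i a a hb0 hi.2.1 hba.symm hi.1.symm hba.symm hi.1.symm
    rw [Finset.sum_congr rfl hA, Finset.sum_const] at h
    have hcard : ((univ.erase (0 : Fin (2 * g + 2))).erase a).card = 2 * g := by
      rw [Finset.card_erase_of_mem hamem, Finset.card_erase_of_mem (Finset.mem_univ _),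
        Finset.card_univ, Fintype.card_fin]
      omega
    rw [hcard] at h
    have hz : (2 * g) • ψ (fv _ b) (fv _ a) (fv _ a) = 0 := by
      rw [nsmul_eq_mul]
      have h2 : ((2 * g : ℕ) : ZMod 2) = 0 := by
        rw [← ZMod.natCast_mod, Nat.mul_mod_right, Nat.cast_zero]
      rw [h2, zero_mul]
    rw [hz, zero_add] at h
    exact h
  -- membership facts
  have ho1mem : o1 ∈ univ.erase (0 : Fin (2 * g + 2)) := by simp [h1]
  have ho2mem : o2 ∈ (univ.erase (0 : Fin (2 * g + 2))).erase o1 := by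
    simp [h2, h12.symm, Ne.symm h12]
  have hcard3 : (((univ.erase (0 : Fin (2 * g + 2))).erase o1).erase o2).card = 2 * g - 1 := by
    rw [Finset.card_erase_of_mem ho2mem, Finset.card_erase_of_mem ho1mem,
      Finset.card_erase_of_mem (Finset.mem_univ _), Finset.card_univ, Fintype.card_fin]
    omega
  have hsmul : ∀ c : ZMod 2, (2 * g - 1) • c = c := by
    intro c
    rw [nsmul_eq_mul]
    have hone : ((2 * g - 1 : ℕ) : ZMod 2) = 1 := by
      rw [← ZMod.natCast_mod]
      have : (2 * g - 1) % 2 = 1 := by omega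
      rw [this, Nat.cast_one]
    rw [hone, one_mul]
  -- equation e1
  have e1 : ψ (fv _ o2) (fv _ o3) (fv _ o4) + ψ (fv _ o1) (fv _ o2) (fv _ o1)
      + ψ (fv _ o1) (fv _ o1) (fv _ o2) = 0 := by
    have h := hsum1 (fv _ o1) (fv _ o2)
    rw [← Finset.sum_erase_add _ _ ho1mem, ← Finset.sum_erase_add _ _ ho2mem] at h
    have hA : ∀ i ∈ ((univ.erase (0 : Fin (2 * g + 2))).erase o1).erase o2,
        ψ (fv _ i) (fv _ o1) (fv _ o2) = ψ (fv _ o2) (fv _ o3) (fv _ o4) := by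
      intro i hi
      simp only [Finset.mem_erase] at hi
      exact LA i o1 o2 hi.2.2.1 h1 h2 hi.2.1 hi.1 h12
    rw [Finset.sum_congr rfl hA, Finset.sum_const, hcard3, hsmul,
      LB13 o2 o1 h2 h1 (Ne.symm h12)] at h
    exact h
  -- equation e2
  have e2 : ψ (fv _ o2) (fv _ o3) (fv _ o4) + ψ (fv _ o2) (fv _ o1) (fv _ o1)
      + ψ (fv _ o1) (fv _ o1) (fv _ o2) = 0 := by
    have h := hsum2 (fv _ o1) (fv _ o2)
    rw [← Finset.sum_erase_add _ _ ho1mem, ← Finset.sum_erase_add _ _ ho2mem] at h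
    have hA : ∀ i ∈ ((univ.erase (0 : Fin (2 * g + 2))).erase o1).erase o2,
        ψ (fv _ o1) (fv _ i) (fv _ o2) = ψ (fv _ o2) (fv _ o3) (fv _ o4) := by
      intro i hi
      simp only [Finset.mem_erase] at hi
      exact LA o1 i o2 h1 hi.2.2.1 h2 (Ne.symm hi.2.1) h12 hi.1
    rw [Finset.sum_congr rfl hA, Finset.sum_const, hcard3, hsmul,
      LB23 o2 o1 h2 h1 (Ne.symm h12)] at h
    exact h
  -- equation e3
  have e3 : ψ (fv _ o2) (fv _ o3) (fv _ o4) + ψ (fv _ o2) (fv _ o1) (fv _ o1)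
      + ψ (fv _ o1) (fv _ o2) (fv _ o1) = 0 := by
    have h := hsum3 (fv _ o1) (fv _ o2)
    rw [← Finset.sum_erase_add _ _ ho1mem, ← Finset.sum_erase_add _ _ ho2mem] at h
    have hA : ∀ i ∈ ((univ.erase (0 : Fin (2 * g + 2))).erase o1).erase o2,
        ψ (fv _ o1) (fv _ o2) (fv _ i) = ψ (fv _ o2) (fv _ o3) (fv _ o4) := by
      intro i hi
      simp only [Finset.mem_erase] at hi
      exact LA o1 o2 i h1 h2 hi.2.2.1 h12 (Ne.symm hi.2.1) (Ne.symm hi.1)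
    rw [Finset.sum_congr rfl hA, Finset.sum_const, hcard3, hsmul,
      LB23 o2 o1 h2 h1 (Ne.symm h12)] at h
    exact h
  -- equation e4 from the transposition (0 1)
  have e4 : ψ (fv _ o1) (fv _ o1) (fv _ o2) + ψ (fv _ o1) (fv _ o2) (fv _ o1)
      + ψ (fv _ o2) (fv _ o1) (fv _ o1) + ψ (fv _ o2) (fv _ o3) (fv _ o4)
      = ψ (fv _ o2) (fv _ o3) (fv _ o4) := by
    have h := hinv (Equiv.swap 0 o1) (fv _ o2) (fv _ o3) (fv _ o4)
      (fv_sum_coords _ _) (fv_sum_coords _ _) (fv_sum_coords _ _)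
    rw [fv_comp_tau _ o1 h1 o2 h2 (Ne.symm h12), fv_comp_tau _ o1 h1 o3 h3 (Ne.symm h13),
      fv_comp_tau _ o1 h1 o4 h4 (Ne.symm h14)] at h
    simp only [add1, add2, add3] at h
    rw [LC o1 h1, LB12 o1 o4 h1 h4 h14, LB13 o1 o3 h1 h3 h13,
      LA o1 o3 o4 h1 h3 h4 h13 h14 h34, LA o2 o1 o4 h2 h1 h4 (Ne.symm h12) h24 h14,
      LA o2 o3 o1 h2 h3 h1 h23 (Ne.symm h12) (Ne.symm h13)] at h
    -- now h is an equation in the four unknowns; finish by brute force below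
    revert h e1 e2 e3
    generalize ψ (fv _ o2) (fv _ o3) (fv _ o4) = A
    generalize ψ (fv _ o1) (fv _ o1) (fv _ o2) = B12
    generalize ψ (fv _ o1) (fv _ o2) (fv _ o1) = B13
    generalize ψ (fv _ o2) (fv _ o1) (fv _ o1) = B23
    revert A B12 B13 B23
    decide
  -- solve the linear system over ZMod 2
  have final : ψ (fv _ o2) (fv _ o3) (fv _ o4) = 0 ∧ ψ (fv _ o1) (fv _ o1) (fv _ o2) = 0 ∧
      ψ (fv _ o1) (fv _ o2) (fv _ o1) = 0 ∧ ψ (fv _ o2) (fv _ o1) (fv _ o1) = 0 := by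
    revert e1 e2 e3 e4
    generalize ψ (fv _ o2) (fv _ o3) (fv _ o4) = A
    generalize ψ (fv _ o1) (fv _ o1) (fv _ o2) = B12
    generalize ψ (fv _ o1) (fv _ o2) (fv _ o1) = B13
    generalize ψ (fv _ o2) (fv _ o1) (fv _ o1) = B23
    revert A B12 B13 B23
    decide
  -- all basic values vanish
  have key : ∀ a b c : Fin (2 * g + 2), a ≠ 0 → b ≠ 0 → c ≠ 0 →
      ψ (fv _ a) (fv _ b) (fv _ c) = 0 := by
    intro a b c ha hb hc
    by_cases hab : a = b
    · by_cases hac : a = c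
      · rw [← hab, ← hac]
        exact LC a ha
      · rw [← hab]
        exact (LB12 a c ha hc hac).trans final.2.1
    · by_cases hac : a = c
      · rw [← hac]
        exact (LB13 a b ha hb hab).trans final.2.2.1
      · by_cases hbc : b = c
        · rw [← hbc]
          exact (LB23 b a hb ha (Ne.symm hab)).trans final.2.2.2
        · exact (LA a b c ha hb hc hab hac hbc).trans final.1
  -- conclude by multilinear reduction in each slot
  intro x y z hx hy hz
  have step3 : ∀ a b : Fin (2 * g + 2), a ≠ 0 → b ≠ 0 → ψ (fv _ a) (fv _ b) z = 0 :=
    fun a b ha hb => aux_red _ (fun w => ψ (fv _ a) (fv _ b) w) (fun u v => add3 _ _ u v)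
      (fun i hi => key a b i ha hb hi) z hz
  have step2 : ∀ a : Fin (2 * g + 2), a ≠ 0 → ψ (fv _ a) y z = 0 :=
    fun a ha => aux_red _ (fun w => ψ (fv _ a) w z) (fun u v => add2 _ u v _)
      (fun i hi => step3 a i ha hi) y hy
  exact aux_red _ (fun w => ψ w y z) (fun u v => add1 u v _ _) (fun i hi => step2 i hi) x hx
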